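/- Let X be a topological vector space and T : X → X a hypercyclic continuous linear operator (some x has dense orbit {Tⁿx : n ≥ 0}). Then X has no closed T-invariant subspace of finite positive codimension. In particular, if dim X' satisfies 0 < dim X' < ∞, then X supports no hypercyclic operator. -/

import Mathlib

set_option maxHeartbeats 1000000

open Submodule Set Module

/-- A nonzero finite-dimensional Hausdorff TVS over `ℝ` or `ℂ` supports no
linear map with a dense orbit. -/
lemma no_hypercyclic_findim_aux {𝕜 : Type*} [RCLike 𝕜] {E : Type*}
    [AddCommGroup E] [Module 𝕜 E] [TopologicalSpace E] [IsTopologicalAddGroup E]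
    [ContinuousSMul 𝕜 E] [T2Space E] [FiniteDimensional 𝕜 E] [Nontrivial E]
    (S : E →ₗ[𝕜] E) (x : E)
    (hx : Dense (Set.range fun n : ℕ => (S ^ n) x)) : False := by
  classical
  set d := Module.finrank 𝕜 E with hd_def
  have hd : 0 < d := Module.finrank_pos
  set v : ℕ → E := fun n => (S ^ n) x with hv_def
  have hv : ∀ n, v (n + 1) = S (v n) := by
    intro n
    simp only [hv_def, pow_succ', Module.End.mul_apply]
  set V : ℕ → Submodule 𝕜 E := fun k => Submodule.span 𝕜 (v '' Set.Iio k) with hV_def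
  have hVmono : ∀ {k m : ℕ}, k ≤ m → V k ≤ V m := by
    intro k m hkm
    exact Submodule.span_mono (Set.image_mono (fun i hi => lt_of_lt_of_le hi hkm))
  have hmapS : ∀ k, Submodule.map S (V k) ≤ V (k + 1) := by
    intro k
    rw [hV_def]
    simp only
    rw [Submodule.map_span]
    apply Submodule.span_mono
    rintro _ ⟨_, ⟨i, hi, rfl⟩, rfl⟩
    exact ⟨i + 1, Set.mem_Iio.mpr (Nat.succ_lt_succ (Set.mem_Iio.mp hi)), hv i⟩
  -- the span of the whole orbit is everything
  have hU : Submodule.span 𝕜 (Set.range v) = ⊤ := by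
    have hcl : IsClosed ((Submodule.span 𝕜 (Set.range v) : Submodule 𝕜 E) : Set E) :=
      Submodule.closed_of_finiteDimensional _
    have hdense : Dense ((Submodule.span 𝕜 (Set.range v) : Submodule 𝕜 E) : Set E) :=
      hx.mono Submodule.subset_span
    exact SetLike.ext' (by rw [Submodule.top_coe, ← hcl.closure_eq, hdense.closure_eq])
  -- the first `d` orbit vectors span
  have hVd : V d = ⊤ := by
    by_cases hex : ∃ k, k < d ∧ V k = V (k + 1)
    · obtain ⟨k, hk, hkeq⟩ := hex
      have hall : ∀ n, v n ∈ V (k + 1) := by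
        intro n
        induction n with
        | zero => exact Submodule.subset_span ⟨0, Set.mem_Iio.mpr (by omega), rfl⟩
        | succ n ih =>
          have h1 : v (n + 1) ∈ Submodule.map S (V (k + 1)) := ⟨v n, ih, (hv n).symm⟩
          have h2 := hmapS k
          rw [hkeq] at h2
          exact h2 h1
      have hle : Submodule.span 𝕜 (Set.range v) ≤ V (k + 1) :=
        Submodule.span_le.mpr (by rintro _ ⟨n, rfl⟩; exact hall n)
      rw [hU] at hle
      exact top_le_iff.mp (hle.trans (hVmono (by omega)))
    · push_neg at hex
      have hrank : ∀ k, k ≤ d → k ≤ Module.finrank 𝕜 (V k) := by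
        intro k
        induction k with
        | zero => intro _; exact Nat.zero_le _
        | succ k ih =>
          intro hk1
          have hlt : V k < V (k + 1) :=
            lt_of_le_of_ne (hVmono (Nat.le_succ k)) (hex k (by omega))
          have := Submodule.finrank_lt_finrank_of_lt hlt
          have := ih (by omega)
          omega
      have h1 := hrank d le_rfl
      have h2 := Submodule.finrank_le (V d)
      exact Submodule.eq_top_of_finrank_eq (by omega)
  -- hence they are linearly independent
  have hrange : Set.range (fun i : Fin d => v (i : ℕ)) = v '' Set.Iio d := by
    ext y
    constructor
    · rintro ⟨i, rfl⟩; exact ⟨i, i.isLt, rfl⟩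
    · rintro ⟨n, hn, rfl⟩; exact ⟨⟨n, hn⟩, rfl⟩
  have hli : LinearIndependent 𝕜 (fun i : Fin d => v (i : ℕ)) := by
    apply linearIndependent_of_top_le_span_of_card_eq_finrank
    · rw [hrange]; exact le_of_eq hVd.symm
    · simp [hd_def]
  haveI : Nonempty (Fin d) := ⟨⟨0, hd⟩⟩
  set bv : Basis (Fin d) 𝕜 E :=
    basisOfLinearIndependentOfCardEqFinrank hli (by simp [hd_def]) with hbv_def
  set bE : Basis (Fin d) 𝕜 E := Module.finBasis 𝕜 E with hbE_def
  -- the determinant function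
  set Δ : E → 𝕜 := fun y => (bE.toMatrix fun i : Fin d => (S ^ (i : ℕ)) y).det with hΔ_def
  set A : Matrix (Fin d) (Fin d) 𝕜 := LinearMap.toMatrix bE bE S with hA_def
  set a : 𝕜 := A.det with ha_def
  set c : 𝕜 := Δ x with hc_def
  have hcont : Continuous Δ := by
    apply Continuous.matrix_det
    apply continuous_matrix
    intro i j
    exact ((bE.coord i).comp (S ^ (j : ℕ))).continuous_of_finiteDimensional
  have hΔS : ∀ y, Δ (S y) = a * Δ y := by
    intro y
    have hm : (bE.toMatrix fun i : Fin d => (S ^ (i : ℕ)) (S y))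
        = A * (bE.toMatrix fun i : Fin d => (S ^ (i : ℕ)) y) := by
      ext i j
      have hcomm : (S ^ (j : ℕ)) (S y) = S ((S ^ (j : ℕ)) y) := by
        rw [← Module.End.mul_apply, ← pow_succ, pow_succ', Module.End.mul_apply]
      have hmv := LinearMap.toMatrix_mulVec_repr bE bE S ((S ^ (j : ℕ)) y)
      calc (bE.toMatrix fun i : Fin d => (S ^ (i : ℕ)) (S y)) i j
          = bE.repr (S ((S ^ (j : ℕ)) y)) i := by rw [Basis.toMatrix_apply, hcomm]
        _ = (A.mulVec (bE.repr ((S ^ (j : ℕ)) y))) i := by rw [hmv]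
        _ = (A * bE.toMatrix fun i : Fin d => (S ^ (i : ℕ)) y) i j := by
            simp [Matrix.mul_apply, Matrix.mulVec, dotProduct, Basis.toMatrix_apply]
    rw [hΔ_def]
    simp only
    rw [hm, Matrix.det_mul]
  have horb : ∀ n, Δ (v n) = a ^ n * c := by
    intro n
    induction n with
    | zero => simp [hv_def, hc_def]
    | succ n ih => rw [hv, hΔS, ih, pow_succ', mul_assoc]
  have hscale : ∀ t : 𝕜, Δ (t • x) = t ^ d * c := by
    intro t
    have hm : (bE.toMatrix fun i : Fin d => (S ^ (i : ℕ)) (t • x))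
        = t • (bE.toMatrix fun i : Fin d => (S ^ (i : ℕ)) x) := by
      ext i j
      simp [Basis.toMatrix_apply, map_smul]
    rw [hΔ_def]
    simp only
    rw [hm, Matrix.det_smul]
    simp [hc_def, hΔ_def, hd_def]
  have hc : c ≠ 0 := by
    have hbvcoe : ⇑bv = fun i : Fin d => v (i : ℕ) :=
      coe_basisOfLinearIndependentOfCardEqFinrank hli _
    have harg : (fun i : Fin d => (S ^ (i : ℕ)) x) = ⇑bv := by
      rw [hbvcoe]
    have h1 : Δ x = bE.det bv := by
      rw [hΔ_def]
      simp only
      rw [harg, Basis.det_apply]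
    rw [hc_def, h1]
    exact IsUnit.ne_zero (bE.isUnit_det bv)
  -- every value of Δ is a limit of the geometric sequence
  have hclos : ∀ z : E, Δ z ∈ closure (Set.range fun n : ℕ => a ^ n * c) := by
    intro z
    have hz : z ∈ closure (Set.range v) := hx z
    have h1 : Δ z ∈ closure (Δ '' Set.range v) :=
      (image_closure_subset_closure_image hcont) ⟨z, hz, rfl⟩
    refine closure_mono ?_ h1
    rintro _ ⟨_, ⟨n, rfl⟩, rfl⟩
    exact ⟨n, (horb n).symm⟩
  have hcpos : (0 : ℝ) < ‖c‖ := norm_pos_iff.mpr hc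
  have h2d : (2 : ℝ) ≤ 2 ^ d := le_self_pow₀ one_le_two hd.ne'
  rcases le_or_gt ‖a‖ 1 with h1 | h1
  · -- orbit values bounded by ‖c‖, but Δ is unbounded
    have hb : closure (Set.range fun n : ℕ => a ^ n * c) ⊆ {w : 𝕜 | ‖w‖ ≤ ‖c‖} := by
      apply closure_minimal _ (isClosed_le continuous_norm continuous_const)
      rintro _ ⟨n, rfl⟩
      rw [Set.mem_setOf_eq, norm_mul, norm_pow]
      calc ‖a‖ ^ n * ‖c‖ ≤ 1 * ‖c‖ :=
            mul_le_mul_of_nonneg_right (pow_le_one₀ (norm_nonneg a) h1) hcpos.le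
        _ = ‖c‖ := one_mul _
    have := hb (hclos ((2 : 𝕜) • x))
    rw [Set.mem_setOf_eq, hscale, norm_mul, norm_pow] at this
    have hn2 : ‖(2 : 𝕜)‖ = 2 := by
      simpa using RCLike.norm_natCast (K := 𝕜) 2
    rw [hn2] at this
    nlinarith
  · -- orbit values bounded below by ‖c‖, but Δ takes small nonzero values
    have hb : closure (Set.range fun n : ℕ => a ^ n * c) ⊆ {w : 𝕜 | ‖c‖ ≤ ‖w‖} := by
      apply closure_minimal _ (isClosed_le continuous_const continuous_norm)
      rintro _ ⟨n, rfl⟩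
      rw [Set.mem_setOf_eq, norm_mul, norm_pow]
      calc ‖c‖ = 1 * ‖c‖ := (one_mul _).symm
        _ ≤ ‖a‖ ^ n * ‖c‖ :=
            mul_le_mul_of_nonneg_right (one_le_pow₀ h1.le) hcpos.le
    have := hb (hclos ((2 : 𝕜)⁻¹ • x))
    rw [Set.mem_setOf_eq, hscale, norm_mul, norm_pow, norm_inv] at this
    have hn2 : ‖(2 : 𝕜)‖ = 2 := by
      simpa using RCLike.norm_natCast (K := 𝕜) 2
    rw [hn2] at this
    have h3 : (2 : ℝ)⁻¹ ^ d ≤ 2⁻¹ := by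
      apply pow_le_of_le_one (by norm_num) (by norm_num) hd.ne'
    nlinarith


/-- A hypercyclic continuous linear operator has no closed invariant subspace
of finite positive codimension; in particular a topological vector space whose
continuous dual has finite positive dimension supports no hypercyclic
operator. -/
theorem stmt_11 {𝕜 : Type*} [RCLike 𝕜] {X : Type*}
    [AddCommGroup X] [Module 𝕜 X] [TopologicalSpace X] [IsTopologicalAddGroup X]
    [ContinuousSMul 𝕜 X] :
    (∀ T : X →L[𝕜] X, (∃ x : X, Dense (Set.range fun n : ℕ => (T ^ n) x)) →
      ∀ W : Submodule 𝕜 X, IsClosed (W : Set X) → (∀ w ∈ W, T w ∈ W) →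
        Module.Finite 𝕜 (X ⧸ W) → W ≠ ⊤ → False) ∧
    (0 < Module.rank 𝕜 (X →L[𝕜] 𝕜) → Module.rank 𝕜 (X →L[𝕜] 𝕜) < Cardinal.aleph0 →
      ¬ ∃ T : X →L[𝕜] X, ∃ x : X, Dense (Set.range fun n : ℕ => (T ^ n) x)) := by
  have h1 : ∀ T : X →L[𝕜] X, (∃ x : X, Dense (Set.range fun n : ℕ => (T ^ n) x)) →
      ∀ W : Submodule 𝕜 X, IsClosed (W : Set X) → (∀ w ∈ W, T w ∈ W) →
        Module.Finite 𝕜 (X ⧸ W) → W ≠ ⊤ → False := by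
    rintro T ⟨x, hx⟩ W hWc hWinv hWfin hWne
    haveI : IsClosed (W : Set X) := hWc
    haveI : Nontrivial (X ⧸ W) :=
      (Submodule.Quotient.nontrivial_iff (p := W)).mpr hWne
    haveI : FiniteDimensional 𝕜 (X ⧸ W) := hWfin
    set S : X ⧸ W →ₗ[𝕜] X ⧸ W :=
      Submodule.mapQ W W (T : X →ₗ[𝕜] X) (fun w hw => hWinv w hw) with hS_def
    have hcomm : ∀ y : X, W.mkQ (T y) = S (W.mkQ y) := by
      intro y
      exact (Submodule.mapQ_apply (p := W) (q := W) (T : X →ₗ[𝕜] X) y).symm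
    have horb : ∀ n : ℕ, (S ^ n) (W.mkQ x) = W.mkQ ((T ^ n) x) := by
      intro n
      induction n with
      | zero => simp
      | succ n ih =>
        have e1 : (T ^ (n + 1)) x = T ((T ^ n) x) := by
          rw [pow_succ', ContinuousLinearMap.mul_apply]
        have e2 : (S ^ (n + 1)) (W.mkQ x) = S ((S ^ n) (W.mkQ x)) := by
          rw [pow_succ', Module.End.mul_apply]
        rw [e1, e2, ih, hcomm]
    have hcontq : Continuous (W.mkQ : X → X ⧸ W) := continuous_quot_mk
    have hdense : Dense (Set.range fun n : ℕ => (S ^ n) (W.mkQ x)) := by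
      rw [dense_iff_inter_open]
      intro U hUo hUne
      obtain ⟨z, hz⟩ := hUne
      obtain ⟨y, rfl⟩ := W.mkQ_surjective z
      obtain ⟨w, hw1, n, hw2⟩ :=
        hx.inter_open_nonempty _ (hUo.preimage hcontq) ⟨y, hz⟩
      refine ⟨W.mkQ w, hw1, n, ?_⟩
      show (S ^ n) (W.mkQ x) = W.mkQ w
      rw [horb n]
      exact congrArg W.mkQ hw2
    exact no_hypercyclic_findim_aux S (W.mkQ x) hdense
  refine ⟨h1, ?_⟩
  rintro hpos hfin ⟨T, x, hx⟩
  haveI : Module.Finite 𝕜 (X →L[𝕜] 𝕜) := Module.rank_lt_aleph0_iff.mp hfin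
  obtain ⟨n, g, hg⟩ := Module.Finite.exists_fin (R := 𝕜) (M := X →L[𝕜] 𝕜)
  set L : Submodule 𝕜 X := ⨅ f : X →L[𝕜] 𝕜, LinearMap.ker (f : X →ₗ[𝕜] 𝕜) with hL_def
  have hmem : ∀ y : X, y ∈ L ↔ ∀ f : X →L[𝕜] 𝕜, f y = 0 := by
    intro y
    simp [hL_def, Submodule.mem_iInf, LinearMap.mem_ker]
  -- closed
  have hLc : IsClosed (L : Set X) := by
    have : (L : Set X) = ⋂ f : X →L[𝕜] 𝕜, f ⁻¹' {0} := by
      ext y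
      simp [hmem y]
    rw [this]
    exact isClosed_iInter fun f => isClosed_singleton.preimage f.continuous
  -- invariant
  have hLinv : ∀ w ∈ L, T w ∈ L := by
    intro w hw
    rw [hmem] at hw ⊢
    intro f
    exact hw (f.comp T)
  -- finite codimension
  have hker : ∀ y : X, y ∈ L ↔ ∀ i : Fin n, g i y = 0 := by
    intro y
    rw [hmem]
    constructor
    · intro h i; exact h (g i)
    · intro h f
      have hfmem : f ∈ Submodule.span 𝕜 (Set.range g) := by rw [hg]; trivial
      induction hfmem using Submodule.span_induction with
      | mem f hf => obtain ⟨i, rfl⟩ := hf; exact h i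
      | zero => rfl
      | add f₁ f₂ _ _ ih1 ih2 => simp [ih1, ih2]
      | smul a f _ ih => simp [ih]
  set φ : X →ₗ[𝕜] (Fin n → 𝕜) := LinearMap.pi (fun i => (g i : X →ₗ[𝕜] 𝕜)) with hφ_def
  have hkerφ : LinearMap.ker φ = L := by
    ext y
    rw [LinearMap.mem_ker, hker y]
    constructor
    · intro h i; exact congrFun h i
    · intro h; funext i; exact h i
  haveI : Module.Finite 𝕜 (X ⧸ L) := by
    have e : (X ⧸ L) ≃ₗ[𝕜] LinearMap.range φ :=
      (Submodule.quotEquivOfEq L (LinearMap.ker φ) hkerφ.symm).trans φ.quotKerEquivRange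
    exact Module.Finite.equiv e.symm
  -- nontrivial codimension
  have hLne : L ≠ ⊤ := by
    obtain ⟨f, hf⟩ := rank_pos_iff_exists_ne_zero.mp hpos
    obtain ⟨y, hy⟩ : ∃ y, f y ≠ 0 := by
      by_contra h
      push_neg at h
      exact hf (by ext y; exact h y)
    intro htop
    exact hy ((hmem y).mp (htop ▸ Submodule.mem_top) f)
  exact h1 T ⟨x, hx⟩ L hLc hLinv ‹_› hLne
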